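/- arXiv:1710.09156 — 2 statements merged into one kernel-verified Lean document; each statement's English description precedes it below -/
import Mathlib

section
/- For N = 4 and g = (2, 1, 2)ᵀ ∈ ℤ³ (which satisfies S_4[g] = 0), every K ∈ Γ_4 has the property that the first and the third entry of Kg are even; in particular there is no K ∈ Γ_4 with Kg = (±1, 0, 0)ᵀ, so the cancellation statement of Lemma 1(a) fails for N = 4. -/
open Matrix Pointwise

noncomputable section

/-- The even symmetric matrix `S_N` of signature `(1,2)`, over `ℤ`. -/
def SNint (N : ℕ) : Matrix (Fin 3) (Fin 3) ℤ :=
  !![0, 0, 1; 0, -2 * (N : ℤ), 0; 1, 0, 0]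

/-- The even symmetric matrix `S_N` of signature `(1,2)`, over `ℝ`. -/
def SN (N : ℕ) : Matrix (Fin 3) (Fin 3) ℝ :=
  !![0, 0, 1; 0, -2 * (N : ℝ), 0; 1, 0, 0]

/-- The even symmetric matrix `Ŝ_N = [[0,0,1],[0,S_N,0],[1,0,0]]` of signature `(2,3)`, over `ℤ`. -/
def SNhatInt (N : ℕ) : Matrix (Fin 5) (Fin 5) ℤ :=
  !![0,0,0,0,1; 0,0,0,1,0; 0,0,-2*(N:ℤ),0,0; 0,1,0,0,0; 1,0,0,0,0]

/-- The even symmetric matrix `Ŝ_N`, over `ℝ`. -/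
def SNhat (N : ℕ) : Matrix (Fin 5) (Fin 5) ℝ :=
  !![0,0,0,0,1; 0,0,0,1,0; 0,0,-2*(N:ℝ),0,0; 0,1,0,0,0; 1,0,0,0,0]

/-- The special orthogonal group of a real symmetric matrix `S`:
`{K ∈ SL(ℝ) : S[K] = KᵀSK = S}`. -/
def SOset {n : ℕ} (S : Matrix (Fin n) (Fin n) ℝ) : Set (Matrix (Fin n) (Fin n) ℝ) :=
  {K | K.det = 1 ∧ Kᵀ * S * K = S}

/-- `SO₀(S;ℝ)`: the connected component of the identity in `SO(S;ℝ)`. -/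
def SOzero {n : ℕ} (S : Matrix (Fin n) (Fin n) ℝ) : Set (Matrix (Fin n) (Fin n) ℝ) :=
  connectedComponentIn (SOset S) 1

/-- Entrywise cast of an integer matrix to a real matrix. -/
def matCast {n : ℕ} (K : Matrix (Fin n) (Fin n) ℤ) : Matrix (Fin n) (Fin n) ℝ :=
  K.map fun z => (z : ℝ)

/-- A real matrix is integral if all its entries are integers. -/
def IsIntegralMat {n : ℕ} (K : Matrix (Fin n) (Fin n) ℝ) : Prop :=
  ∀ i j, ∃ z : ℤ, K i j = z

/-- A real matrix is rational if all its entries are rational numbers. -/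
def IsRationalMat {n : ℕ} (K : Matrix (Fin n) (Fin n) ℝ) : Prop :=
  ∀ i j, ∃ q : ℚ, K i j = q

/-- `Γ_N = SO₀(S_N;ℤ)`, the integral matrices in `SO₀(S_N;ℝ)`. -/
def GammaN (N : ℕ) : Set (Matrix (Fin 3) (Fin 3) ℝ) :=
  {K | K ∈ SOzero (SN N) ∧ IsIntegralMat K}

/-- `Γ̂_N = SO₀(Ŝ_N;ℤ)`, the integral matrices in `SO₀(Ŝ_N;ℝ)`. -/
def GammaHat (N : ℕ) : Set (Matrix (Fin 5) (Fin 5) ℝ) :=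
  {M | M ∈ SOzero (SNhat N) ∧ IsIntegralMat M}

/-- `𝒢_N = SO₀(S_N;ℚ)`, the rational matrices in `SO₀(S_N;ℝ)`. -/
def GN (N : ℕ) : Set (Matrix (Fin 3) (Fin 3) ℝ) :=
  {K | K ∈ SOzero (SN N) ∧ IsRationalMat K}

/-- `𝒢̂_N = SO₀(Ŝ_N;ℚ)`, the rational matrices in `SO₀(Ŝ_N;ℝ)`. -/
def GhatN (N : ℕ) : Set (Matrix (Fin 5) (Fin 5) ℝ) :=
  {M | M ∈ SOzero (SNhat N) ∧ IsRationalMat M}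


private lemma zmod2_key (p q r s t u : ZMod 2)
    (h1 : p * s = 0) (h2 : r * u = 0) (h3 : p * u + s * r = 1)
    (h4 : p * t + s * q = 0) (h5 : q * u + t * r = 0) :
    q = 0 ∧ t = 0 := by
  revert h1 h2 h3 h4 h5
  revert p q r s t u
  decide

/-- For `N = 4` and `g = (2,1,2)ᵀ` (isotropic for `S_4`), the first and third entry of `Kg`
are even for every `K ∈ Γ_4`; in particular no `K ∈ Γ_4` achieves `Kg = (±1,0,0)ᵀ`
(`gcd(2,1,2) = 1`), so Lemma 1(a) fails for `N = 4`. -/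
theorem lemma1a_fails_for_N_four :
    ((![2,1,2] : Fin 3 → ℤ) ⬝ᵥ (SNint 4).mulVec ![2,1,2] = 0) ∧
    (∀ K ∈ GammaN 4,
      (∃ a : ℤ, K.mulVec ![(2:ℝ),1,2] 0 = 2 * a) ∧
      (∃ b : ℤ, K.mulVec ![(2:ℝ),1,2] 2 = 2 * b)) ∧
    ¬ ∃ K ∈ GammaN 4, ∃ γ : ℤ, (γ = 1 ∨ γ = -1) ∧
        K.mulVec ![(2:ℝ),1,2] = ![(γ : ℝ), 0, 0] := by
  have key : ∀ K ∈ GammaN 4,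
      (∃ a : ℤ, K.mulVec ![(2:ℝ),1,2] 0 = 2 * a) ∧
      (∃ b : ℤ, K.mulVec ![(2:ℝ),1,2] 2 = 2 * b) := by
    intro K hK
    obtain ⟨hK0, hKint⟩ := hK
    have hS : Kᵀ * SN 4 * K = SN 4 := (connectedComponentIn_subset _ _ hK0).2
    choose z hz using hKint
    -- extract scalar equations over ℝ, then over ℤ
    have ent : ∀ i j, (Kᵀ * SN 4 * K) i j = SN 4 i j := fun i j => by rw [hS]
    have e00 := ent 0 0
    have e22 := ent 2 2
    have e02 := ent 0 2
    have e01 := ent 0 1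
    have e12 := ent 1 2
    simp [SN, Matrix.mul_apply, Fin.sum_univ_three, hz, Matrix.transpose_apply, Matrix.vecHead, Matrix.vecTail] at e00 e22 e02 e01 e12
    norm_num at e00 e22 e02 e01 e12
    have iq1 : z 0 0 * z 2 0 = 4 * z 1 0 ^ 2 := by
      have : ((z 0 0 * z 2 0 : ℤ) : ℝ) = ((4 * z 1 0 ^ 2 : ℤ) : ℝ) := by push_cast; nlinarith [e00]
      exact_mod_cast this
    have iq2 : z 0 2 * z 2 2 = 4 * z 1 2 ^ 2 := by
      have : ((z 0 2 * z 2 2 : ℤ) : ℝ) = ((4 * z 1 2 ^ 2 : ℤ) : ℝ) := by push_cast; nlinarith [e22]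
      exact_mod_cast this
    have iq3 : z 0 0 * z 2 2 + z 2 0 * z 0 2 - 8 * (z 1 0 * z 1 2) = 1 := by
      have : ((z 0 0 * z 2 2 + z 2 0 * z 0 2 - 8 * (z 1 0 * z 1 2) : ℤ) : ℝ) = ((1 : ℤ) : ℝ) := by
        push_cast; nlinarith [e02]
      exact_mod_cast this
    have iq4 : z 0 0 * z 2 1 + z 2 0 * z 0 1 - 8 * (z 1 0 * z 1 1) = 0 := by
      have : ((z 0 0 * z 2 1 + z 2 0 * z 0 1 - 8 * (z 1 0 * z 1 1) : ℤ) : ℝ) = ((0 : ℤ) : ℝ) := by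
        push_cast; nlinarith [e01]
      exact_mod_cast this
    have iq5 : z 0 1 * z 2 2 + z 2 1 * z 0 2 - 8 * (z 1 1 * z 1 2) = 0 := by
      have : ((z 0 1 * z 2 2 + z 2 1 * z 0 2 - 8 * (z 1 1 * z 1 2) : ℤ) : ℝ) = ((0 : ℤ) : ℝ) := by
        push_cast; nlinarith [e12]
      exact_mod_cast this
    -- pass to ZMod 2
    have c4 : ((4 : ℤ) : ZMod 2) = 0 := by decide
    have c8 : ((8 : ℤ) : ZMod 2) = 0 := by decide
    have m1 : ((z 0 0 : ZMod 2)) * (z 2 0 : ZMod 2) = 0 := by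
      have h := congrArg (Int.cast : ℤ → ZMod 2) iq1
      push_cast at h
      rw [h, show ((4:ZMod 2)) = 0 from by decide, zero_mul]
    have m2 : ((z 0 2 : ZMod 2)) * (z 2 2 : ZMod 2) = 0 := by
      have h := congrArg (Int.cast : ℤ → ZMod 2) iq2
      push_cast at h
      rw [h, show ((4:ZMod 2)) = 0 from by decide, zero_mul]
    have m3 : ((z 0 0 : ZMod 2)) * (z 2 2 : ZMod 2) + (z 2 0 : ZMod 2) * (z 0 2 : ZMod 2) = 1 := by
      have h := congrArg (Int.cast : ℤ → ZMod 2) iq3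
      push_cast at h
      rw [show ((8:ZMod 2)) = 0 from by decide] at h
      simpa using h
    have m4 : ((z 0 0 : ZMod 2)) * (z 2 1 : ZMod 2) + (z 2 0 : ZMod 2) * (z 0 1 : ZMod 2) = 0 := by
      have h := congrArg (Int.cast : ℤ → ZMod 2) iq4
      push_cast at h
      rw [show ((8:ZMod 2)) = 0 from by decide] at h
      simpa using h
    have m5 : ((z 0 1 : ZMod 2)) * (z 2 2 : ZMod 2) + (z 2 1 : ZMod 2) * (z 0 2 : ZMod 2) = 0 := by
      have h := congrArg (Int.cast : ℤ → ZMod 2) iq5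
      push_cast at h
      rw [show ((8:ZMod 2)) = 0 from by decide] at h
      simpa using h
    obtain ⟨hq, ht⟩ := zmod2_key (z 0 0) (z 0 1) (z 0 2) (z 2 0) (z 2 1) (z 2 2) m1 m2 m3 m4 m5
    have hq2 : (2 : ℤ) ∣ z 0 1 := (ZMod.intCast_zmod_eq_zero_iff_dvd _ 2).mp hq
    have ht2 : (2 : ℤ) ∣ z 2 1 := (ZMod.intCast_zmod_eq_zero_iff_dvd _ 2).mp ht
    obtain ⟨c, hc⟩ := hq2
    obtain ⟨d, hd⟩ := ht2
    constructor
    · refine ⟨z 0 0 + c + z 0 2, ?_⟩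
      simp [Matrix.mulVec, dotProduct, Fin.sum_univ_three, hz, Matrix.vecHead, Matrix.vecTail]
      push_cast [hc]; ring
    · refine ⟨z 2 0 + d + z 2 2, ?_⟩
      simp [Matrix.mulVec, dotProduct, Fin.sum_univ_three, hz, Matrix.vecHead, Matrix.vecTail]
      push_cast [hd]; ring
  refine ⟨by norm_num [SNint, Matrix.mulVec, dotProduct, Fin.sum_univ_three, Matrix.vecHead, Matrix.vecTail]; rfl, key, ?_⟩
  rintro ⟨K, hK, γ, hγ, hKg⟩
  obtain ⟨⟨a, ha⟩, -⟩ := key K hK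
  rw [hKg] at ha
  simp at ha
  have : γ = 2 * a := by exact_mod_cast ha
  rcases hγ with h | h <;> omega
end
end

section
/- Let N ∈ ℕ be squarefree with N > 1. Set M := (1/N)·diag(1, N, N², N) and let W_N = [[V_N, 0],[0, (V_Nᵀ)⁻¹]] with V_N = (1/√N)[[0, N],[−1, 0]]. Then Σ_N (W_N M W_N) Σ_N ≠ Σ_N M Σ_N; consequently the Hecke algebra of the pair (Σ_N, 𝔾) fails to be commutative for N > 1. -/
open Matrix Pointwise

noncomputable section

/-- The symplectic form `J = [[0,-E₂],[E₂,0]]`. -/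
def Jmat : Matrix (Fin 4) (Fin 4) ℝ :=
  !![0,0,-1,0; 0,0,0,-1; 1,0,0,0; 0,1,0,0]

/-- The real symplectic group `Sp₂(ℝ) = {M : MᵀJM = J}`. -/
def Sp2 : Set (Matrix (Fin 4) (Fin 4) ℝ) :=
  {M | Mᵀ * Jmat * M = Jmat}

/-- `𝔾 = {(1/√m)M ∈ Sp₂(ℝ) : M integral, m ∈ ℕ}`. -/
def GG : Set (Matrix (Fin 4) (Fin 4) ℝ) :=
  {M | M ∈ Sp2 ∧ ∃ m : ℕ, 0 < m ∧ ∀ i j, ∃ z : ℤ, Real.sqrt m * M i j = (z : ℝ)}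

/-- The paramodular integrality shape (11): entry `(2,4)` lies in `(1/N)ℤ`, entries
`(1,2), (3,2), (4,1), (4,2), (4,3)` lie in `Nℤ`, and all other entries lie in `ℤ`
(indices 1-based). -/
def pshape (N : ℕ) (M : Matrix (Fin 4) (Fin 4) ℝ) : Prop :=
  (∃ z : ℤ, M 1 3 = (z : ℝ) / N) ∧
  (∃ z : ℤ, M 0 1 = (N : ℝ) * z) ∧ (∃ z : ℤ, M 2 1 = (N : ℝ) * z) ∧
  (∃ z : ℤ, M 3 0 = (N : ℝ) * z) ∧ (∃ z : ℤ, M 3 1 = (N : ℝ) * z) ∧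
  (∃ z : ℤ, M 3 2 = (N : ℝ) * z) ∧
  (∃ z : ℤ, M 0 0 = (z : ℝ)) ∧ (∃ z : ℤ, M 0 2 = (z : ℝ)) ∧ (∃ z : ℤ, M 0 3 = (z : ℝ)) ∧
  (∃ z : ℤ, M 1 0 = (z : ℝ)) ∧ (∃ z : ℤ, M 1 1 = (z : ℝ)) ∧ (∃ z : ℤ, M 1 2 = (z : ℝ)) ∧
  (∃ z : ℤ, M 2 0 = (z : ℝ)) ∧ (∃ z : ℤ, M 2 2 = (z : ℝ)) ∧ (∃ z : ℤ, M 2 3 = (z : ℝ)) ∧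
  (∃ z : ℤ, M 3 3 = (z : ℝ))

/-- The paramodular group `Σ_N` of degree 2 and level `N`. -/
def SigmaN (N : ℕ) : Set (Matrix (Fin 4) (Fin 4) ℝ) :=
  {M | M ∈ Sp2 ∧ pshape N M}

/-- The `2×2` matrix `V_d = (1/√d)·[[αd, βN],[γ, δd]]`. -/
def Vd (N d : ℕ) (α β γ δ : ℤ) : Matrix (Fin 2) (Fin 2) ℝ :=
  (Real.sqrt d)⁻¹ • !![(α : ℝ) * d, (β : ℝ) * N; (γ : ℝ), (δ : ℝ) * d]

/-- The block diagonal `4×4` matrix `[[A, 0],[0, D]]` with `2×2` blocks. -/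
def fourBlock (A D : Matrix (Fin 2) (Fin 2) ℝ) : Matrix (Fin 4) (Fin 4) ℝ :=
  !![A 0 0, A 0 1, 0, 0;
     A 1 0, A 1 1, 0, 0;
     0, 0, D 0 0, D 0 1;
     0, 0, D 1 0, D 1 1]

/-- `W` is a matrix `W_d = [[V_d, 0],[0, (V_dᵀ)⁻¹]]` with `det V_d = 1` for `d ∣ N`. -/
def IsWd (N d : ℕ) (W : Matrix (Fin 4) (Fin 4) ℝ) : Prop :=
  d ∣ N ∧ ∃ α β γ δ : ℤ,
    (Vd N d α β γ δ).det = 1 ∧ W = fourBlock (Vd N d α β γ δ) ((Vd N d α β γ δ)ᵀ)⁻¹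

/-- The extended paramodular group `Σ*_N`: the subgroup generated by `Σ_N` and the
matrices `W_d`, `d ∣ N`, realized as the smallest subset containing the generators
and closed under the monoid/inverse operations. -/
def SigmaStar (N : ℕ) : Set (Matrix (Fin 4) (Fin 4) ℝ) :=
  ⋂₀ {G : Set (Matrix (Fin 4) (Fin 4) ℝ) |
      SigmaN N ⊆ G ∧ {W | ∃ d, IsWd N d W} ⊆ G ∧
      (1 : Matrix (Fin 4) (Fin 4) ℝ) ∈ G ∧
      (∀ x ∈ G, ∀ y ∈ G, x * y ∈ G) ∧ (∀ x ∈ G, x⁻¹ ∈ G)}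

/-- `ν(M)`: the set of `m ∈ ℕ` such that `√m · M` has the paramodular
integrality shape (11); `ν(M)` is its least element. -/
def nuSet (N : ℕ) (M : Matrix (Fin 4) (Fin 4) ℝ) : Set ℕ :=
  {m | 0 < m ∧ pshape N (Real.sqrt m • M)}

namespace Cor2Aux

def Cmat (N : ℕ) : Matrix (Fin 4) (Fin 4) ℝ :=
  !![0, (N:ℝ), 0, 0; -1, 0, 0, 0; 0, 0, 0, 1; 0, 0, -(N:ℝ), 0]

def Pc (N : ℕ) (x : Fin 4 → ℝ) : Prop :=
  (∃ z : ℤ, x 0 = (N:ℝ) * z) ∧ (∃ z : ℤ, x 1 = (z:ℝ)) ∧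
  (∃ z : ℤ, x 2 = (N:ℝ) * z) ∧ (∃ z : ℤ, x 3 = (N:ℝ) * z)

lemma one_mem_SigmaN (N : ℕ) : (1 : Matrix (Fin 4) (Fin 4) ℝ) ∈ SigmaN N := by
  constructor
  · show (1 : Matrix (Fin 4) (Fin 4) ℝ)ᵀ * Jmat * 1 = Jmat
    simp
  · refine ⟨⟨0, ?_⟩, ⟨0, ?_⟩, ⟨0, ?_⟩, ⟨0, ?_⟩, ⟨0, ?_⟩, ⟨0, ?_⟩,
      ⟨1, ?_⟩, ⟨0, ?_⟩, ⟨0, ?_⟩, ⟨0, ?_⟩, ⟨1, ?_⟩, ⟨0, ?_⟩,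
      ⟨0, ?_⟩, ⟨1, ?_⟩, ⟨0, ?_⟩, ⟨1, ?_⟩⟩ <;>
    · norm_num [Matrix.one_apply, Fin.ext_iff]
      try decide

lemma pc_col1 {N : ℕ} {σ : Matrix (Fin 4) (Fin 4) ℝ} (h : pshape N σ) :
    Pc N (fun i => σ i 1) := by
  obtain ⟨_, h01, h21, _, h31, _, _, _, _, _, h11, _⟩ := h
  exact ⟨h01, h11, h21, h31⟩

lemma pc_mul {N : ℕ} (hN : 0 < N) {σ X : Matrix (Fin 4) (Fin 4) ℝ} (hσ : pshape N σ)
    (hX : Pc N (fun i => X i 1)) : Pc N (fun i => (σ * X) i 1) := by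
  have hNR : (N:ℝ) ≠ 0 := Nat.cast_ne_zero.mpr hN.ne'
  obtain ⟨⟨a13,h13⟩,⟨a01,h01⟩,⟨a21,h21⟩,⟨a30,h30⟩,⟨a31,h31⟩,⟨a32,h32⟩,
    ⟨a00,h00⟩,⟨a02,h02⟩,⟨a03,h03⟩,⟨a10,h10⟩,⟨a11,h11⟩,⟨a12,h12⟩,
    ⟨a20,h20⟩,⟨a22,h22⟩,⟨a23,h23⟩,⟨a33,h33⟩⟩ := hσ
  obtain ⟨⟨x0,hx0⟩,⟨x1,hx1⟩,⟨x2,hx2⟩,⟨x3,hx3⟩⟩ := hX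
  have hx0' : X 0 1 = (N:ℝ) * x0 := hx0
  have hx1' : X 1 1 = (x1:ℝ) := hx1
  have hx2' : X 2 1 = (N:ℝ) * x2 := hx2
  have hx3' : X 3 1 = (N:ℝ) * x3 := hx3
  refine ⟨⟨a00*x0 + a01*x1 + a02*x2 + a03*x3, ?_⟩,
    ⟨(N:ℤ)*a10*x0 + a11*x1 + (N:ℤ)*a12*x2 + a13*x3, ?_⟩,
    ⟨a20*x0 + a21*x1 + a22*x2 + a23*x3, ?_⟩,
    ⟨(N:ℤ)*a30*x0 + a31*x1 + (N:ℤ)*a32*x2 + a33*x3, ?_⟩⟩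
  · show (σ * X) 0 1 = _
    rw [Matrix.mul_apply, Fin.sum_univ_four, h00, h01, h02, h03, hx0', hx1', hx2', hx3']
    push_cast; ring
  · show (σ * X) 1 1 = _
    rw [Matrix.mul_apply, Fin.sum_univ_four, h10, h11, h12, h13, hx0', hx1', hx2', hx3']
    push_cast; field_simp
  · show (σ * X) 2 1 = _
    rw [Matrix.mul_apply, Fin.sum_univ_four, h20, h21, h22, h23, hx0', hx1', hx2', hx3']
    push_cast; ring
  · show (σ * X) 3 1 = _
    rw [Matrix.mul_apply, Fin.sum_univ_four, h30, h31, h32, h33, hx0', hx1', hx2', hx3']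
    push_cast; ring

lemma WdW_eq {N : ℕ} (hN : 0 < N) {W : Matrix (Fin 4) (Fin 4) ℝ}
    (hW : W = (Real.sqrt N)⁻¹ • Cmat N) (d : Matrix (Fin 4) (Fin 4) ℝ) :
    W * d * W = (N:ℝ)⁻¹ • (Cmat N * d * Cmat N) := by
  have hs : Real.sqrt N * Real.sqrt N = (N:ℝ) := Real.mul_self_sqrt (Nat.cast_nonneg N)
  rw [hW, Matrix.smul_mul, Matrix.mul_smul, Matrix.smul_mul, smul_smul, ← mul_inv, hs]

lemma pc_WdW {N : ℕ} (hN : 0 < N) {W d : Matrix (Fin 4) (Fin 4) ℝ}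
    (hW : W = (Real.sqrt N)⁻¹ • Cmat N) (hd : pshape N d) :
    Pc N (fun i => (W * d * W) i 1) := by
  have hNR : (N:ℝ) ≠ 0 := Nat.cast_ne_zero.mpr hN.ne'
  obtain ⟨_,_,_,⟨a30,h30⟩,_,_,⟨a00,h00⟩,_,_,⟨a10,h10⟩,_,_,⟨a20,h20⟩,_⟩ := hd
  simp only [WdW_eq hN hW]
  refine ⟨⟨a10, ?_⟩, ⟨-a00, ?_⟩, ⟨a30, ?_⟩, ⟨-a20, ?_⟩⟩
  · show ((N:ℝ)⁻¹ • (Cmat N * d * Cmat N)) 0 1 = _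
    simp only [Matrix.smul_apply, Matrix.mul_apply, Fin.sum_univ_four, Cmat]
    norm_num [h10, Matrix.vecHead, Matrix.vecTail, Matrix.cons_val_two, Matrix.cons_val_three]
    field_simp
  · show ((N:ℝ)⁻¹ • (Cmat N * d * Cmat N)) 1 1 = _
    simp only [Matrix.smul_apply, Matrix.mul_apply, Fin.sum_univ_four, Cmat]
    norm_num [h00, Matrix.vecHead, Matrix.vecTail, Matrix.cons_val_two, Matrix.cons_val_three]
    field_simp
  · show ((N:ℝ)⁻¹ • (Cmat N * d * Cmat N)) 2 1 = _
    simp only [Matrix.smul_apply, Matrix.mul_apply, Fin.sum_univ_four, Cmat]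
    norm_num [h30, Matrix.vecHead, Matrix.vecTail, Matrix.cons_val_two, Matrix.cons_val_three]
    field_simp
  · show ((N:ℝ)⁻¹ • (Cmat N * d * Cmat N)) 3 1 = _
    simp only [Matrix.smul_apply, Matrix.mul_apply, Fin.sum_univ_four, Cmat]
    norm_num [h20, Matrix.vecHead, Matrix.vecTail, Matrix.cons_val_two, Matrix.cons_val_three]
    field_simp

lemma WMW11 {N : ℕ} (hN : 0 < N) {W M : Matrix (Fin 4) (Fin 4) ℝ}
    (hW : W = (Real.sqrt N)⁻¹ • Cmat N)
    (hM : M = (N : ℝ)⁻¹ • Matrix.diagonal ![1, (N : ℝ), (N : ℝ) ^ 2, (N : ℝ)]) :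
    (W * M * W) 1 1 = -(N:ℝ)⁻¹ := by
  have hNR : (N:ℝ) ≠ 0 := Nat.cast_ne_zero.mpr hN.ne'
  rw [WdW_eq hN hW, hM]
  simp only [Matrix.smul_apply, Matrix.mul_apply, Fin.sum_univ_four, Cmat,
    Matrix.diagonal_apply]
  norm_num [Matrix.vecHead, Matrix.vecTail, Matrix.cons_val_two, Matrix.cons_val_three]
  field_simp

lemma key {N : ℕ} (hN1 : 1 < N) {a b W M : Matrix (Fin 4) (Fin 4) ℝ}
    (hM : M = (N : ℝ)⁻¹ • Matrix.diagonal ![1, (N : ℝ), (N : ℝ) ^ 2, (N : ℝ)])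
    (hWMW : (W * M * W) 1 1 = -(N:ℝ)⁻¹)
    (ha : pshape N a) (hb : Pc N (fun i => b i 1)) :
    a * M * b ≠ W * M * W := by
  intro hEq
  have hN0 : (0:ℕ) < N := by omega
  have hNR : (N:ℝ) ≠ 0 := Nat.cast_ne_zero.mpr hN0.ne'
  obtain ⟨⟨p3,hp3⟩,_,_,_,_,_,_,_,_,⟨p0,hp0⟩,⟨p1,hp1⟩,⟨p2,hp2⟩,_⟩ := ha
  obtain ⟨⟨q0,hq0⟩,⟨q1,hq1⟩,⟨q2,hq2⟩,⟨q3,hq3⟩⟩ := hb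
  have hq0' : b 0 1 = (N:ℝ) * q0 := hq0
  have hq1' : b 1 1 = (q1:ℝ) := hq1
  have hq2' : b 2 1 = (N:ℝ) * q2 := hq2
  have hq3' : b 3 1 = (N:ℝ) * q3 := hq3
  have h11 : (a * M * b) 1 1 = -(N:ℝ)⁻¹ := by rw [hEq, hWMW]
  rw [hM] at h11
  have hcalc : ((p0*q0 + p1*q1 + (N:ℤ)^2*p2*q2 + p3*q3 : ℤ) : ℝ) = -(N:ℝ)⁻¹ := by
    rw [← h11]
    simp [Matrix.mul_apply, Fin.sum_univ_four, Matrix.diagonal_apply, Matrix.smul_apply,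
      hp0, hp1, hp2, hp3, hq0', hq1', hq2', hq3']
    push_cast
    field_simp
  have h2 : (((p0*q0 + p1*q1 + (N:ℤ)^2*p2*q2 + p3*q3) * N : ℤ) : ℝ) = ((-1 : ℤ) : ℝ) := by
    push_cast at hcalc ⊢
    field_simp at hcalc ⊢
    linarith
  have h3 : (p0*q0 + p1*q1 + (N:ℤ)^2*p2*q2 + p3*q3) * (N:ℤ) = -1 := by exact_mod_cast h2
  have h4 : (N:ℤ) ∣ 1 := ⟨-(p0*q0 + p1*q1 + (N:ℤ)^2*p2*q2 + p3*q3), by linarith⟩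
  have h5 : (N:ℤ) ≤ 1 := Int.le_of_dvd one_pos h4
  have h6 : (1:ℤ) < (N:ℤ) := by exact_mod_cast hN1
  omega

lemma W_eq (N : ℕ) (hN : 0 < N) :
    fourBlock ((Real.sqrt N)⁻¹ • !![0, (N:ℝ); -1, 0])
      (((Real.sqrt N)⁻¹ • !![0, (N:ℝ); -1, 0])ᵀ)⁻¹ = (Real.sqrt N)⁻¹ • Cmat N := by
  have hNR : (N:ℝ) ≠ 0 := Nat.cast_ne_zero.mpr hN.ne'
  have hs : Real.sqrt N * Real.sqrt N = (N:ℝ) := Real.mul_self_sqrt (Nat.cast_nonneg N)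
  have hss : (Real.sqrt N)⁻¹ * (Real.sqrt N)⁻¹ = (N:ℝ)⁻¹ := by rw [← mul_inv, hs]
  have htr : (!![0, (N:ℝ); -1, 0])ᵀ = !![0, -1; (N:ℝ), 0] := by
    ext i j; fin_cases i <;> fin_cases j <;> rfl
  have hprod : !![0, (1:ℝ); -(N:ℝ), 0] * !![0, -1; (N:ℝ), 0] = !![(N:ℝ), 0; 0, (N:ℝ)] := by
    ext i j; fin_cases i <;> fin_cases j <;>
      simp [Matrix.mul_apply, Fin.sum_univ_two, Matrix.vecHead, Matrix.vecTail]
  have hinv : (((Real.sqrt N)⁻¹ • !![0, (N:ℝ); -1, 0])ᵀ)⁻¹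
      = (Real.sqrt N)⁻¹ • !![0, 1; -(N:ℝ), 0] := by
    apply Matrix.inv_eq_left_inv
    rw [Matrix.transpose_smul, htr, Matrix.smul_mul, Matrix.mul_smul, smul_smul, hss, hprod]
    ext i j; fin_cases i <;> fin_cases j <;>
      simp [Matrix.one_apply, Matrix.smul_apply, Matrix.vecHead, Matrix.vecTail,
        inv_mul_cancel₀ hNR]
  rw [hinv]
  ext i j
  fin_cases i <;> fin_cases j <;>
    simp [fourBlock, Cmat, Matrix.smul_apply, Matrix.vecHead, Matrix.vecTail]

end Cor2Aux


/-- Corollary 2 (non-commutativity): for squarefree `N > 1`, with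
`M = (1/N)·diag(1, N, N², N)` and `W_N = [[V_N, 0],[0, (V_Nᵀ)⁻¹]]`,
`V_N = (1/√N)·[[0, N],[-1, 0]]`, the double cosets `Σ_N (W_N M W_N) Σ_N` and
`Σ_N M Σ_N` differ; consequently the Hecke algebra of `(Σ_N, 𝔾)` fails to be
commutative: the double cosets of `W_N` and `M` do not commute. -/
theorem corollary2_noncommutative (N : ℕ) (hN : Squarefree N) (hN1 : 1 < N)
    (M W : Matrix (Fin 4) (Fin 4) ℝ)
    (hM : M = (N : ℝ)⁻¹ • Matrix.diagonal ![1, (N : ℝ), (N : ℝ) ^ 2, (N : ℝ)])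
    (hW : W = fourBlock ((Real.sqrt N)⁻¹ • !![0, (N : ℝ); -1, 0])
      (((Real.sqrt N)⁻¹ • !![0, (N : ℝ); -1, 0])ᵀ)⁻¹) :
    SigmaN N * {W * M * W} * SigmaN N ≠ SigmaN N * {M} * SigmaN N ∧
    (SigmaN N * {W} * SigmaN N) * (SigmaN N * {M} * SigmaN N) ≠
      (SigmaN N * {M} * SigmaN N) * (SigmaN N * {W} * SigmaN N) := by
  have hN0 : 0 < N := by omega
  have hW' : W = (Real.sqrt N)⁻¹ • Cor2Aux.Cmat N := by rw [hW, Cor2Aux.W_eq N hN0]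
  have h11 := Cor2Aux.WMW11 hN0 hW' hM
  constructor
  · intro hEq
    have hmem : W * M * W ∈ SigmaN N * {W * M * W} * SigmaN N := by
      have := Set.mul_mem_mul (Set.mul_mem_mul (Cor2Aux.one_mem_SigmaN N)
        (Set.mem_singleton (W*M*W))) (Cor2Aux.one_mem_SigmaN N)
      simpa using this
    rw [hEq] at hmem
    obtain ⟨x, hx, c, hc, hxc⟩ := Set.mem_mul.mp hmem
    obtain ⟨a, ha, m, hm, ham⟩ := Set.mem_mul.mp hx
    rw [Set.mem_singleton_iff] at hm
    rw [hm] at ham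
    have hfin : a * M * c = W * M * W := by rw [← hxc, ← ham]
    exact Cor2Aux.key hN1 hM h11 ha.2 (Cor2Aux.pc_col1 hc.2) hfin
  · intro hEq
    have hmem : W * M ∈ (SigmaN N * {M} * SigmaN N) * (SigmaN N * {W} * SigmaN N) := by
      rw [← hEq]
      have := Set.mul_mem_mul
        (Set.mul_mem_mul (Set.mul_mem_mul (Cor2Aux.one_mem_SigmaN N) (Set.mem_singleton W))
          (Cor2Aux.one_mem_SigmaN N))
        (Set.mul_mem_mul (Set.mul_mem_mul (Cor2Aux.one_mem_SigmaN N) (Set.mem_singleton M))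
          (Cor2Aux.one_mem_SigmaN N))
      simpa using this
    obtain ⟨x, hx, y, hy, hxy⟩ := Set.mem_mul.mp hmem
    obtain ⟨x1, hx1, b, hb, hx1b⟩ := Set.mem_mul.mp hx
    obtain ⟨a, ha, m, hm, ham⟩ := Set.mem_mul.mp hx1
    obtain ⟨y1, hy1, d, hd, hy1d⟩ := Set.mem_mul.mp hy
    obtain ⟨c, hc, w, hw2, hcw⟩ := Set.mem_mul.mp hy1
    rw [Set.mem_singleton_iff] at hm hw2
    rw [hm] at ham
    rw [hw2] at hcw
    have hbig : a * M * b * (c * W * d) = W * M := by rw [← hxy, ← hx1b, ← ham, ← hy1d, ← hcw]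
    have hτmem : Cor2Aux.Pc N (fun i => (b * (c * (W * d * W))) i 1) :=
      Cor2Aux.pc_mul hN0 hb.2 (Cor2Aux.pc_mul hN0 hc.2 (Cor2Aux.pc_WdW hN0 hW' hd.2))
    have hfin : a * M * (b * (c * (W * d * W))) = W * M * W := by
      have h := congrArg (fun X => X * W) hbig
      simp only [mul_assoc] at h ⊢
      exact h
    exact Cor2Aux.key hN1 hM h11 ha.2 hτmem hfin
end
end
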